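/- For every ε ∈ (0,1) and every c ∈ (0,∞): ∫_0^∞ (y/(1−ε)) · e^{−y²/(2(1−ε))} · (e^{−(y−c)²/(2ε)} − e^{−(y+c)²/(2ε)}) dy = √(2π) · √(ε(1−ε)) · c · e^{−c²/2}. -/

import Mathlib

open MeasureTheory Set

open Real

-- odd Gaussian moment is zero
lemma odd_gauss_zero {b : ℝ} :
    ∫ y : ℝ, y * Real.exp (-b * y ^ 2) = 0 := by
  have h := integral_neg_eq_self (fun y : ℝ => y * Real.exp (-b * y ^ 2)) volume
  simp only [neg_neg, neg_sq] at h
  have h2 : ∫ y : ℝ, -y * Real.exp (-b * y ^ 2) = -∫ y : ℝ, y * Real.exp (-b * y ^ 2) := by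
    rw [← integral_neg]; congr 1; ext y; ring
  linarith [h2 ▸ h]

-- integrability of shifted first moment
lemma integrable_F {b : ℝ} (hb : 0 < b) (m : ℝ) :
    Integrable (fun y : ℝ => y * Real.exp (-b * (y - m) ^ 2)) := by
  have h1 : Integrable (fun y : ℝ => (y + m) * Real.exp (-b * y ^ 2)) := by
    have := (integrable_mul_exp_neg_mul_sq hb).add
      ((integrable_exp_neg_mul_sq hb).const_mul m)
    refine this.congr ?_
    filter_upwards with y; simp; ring
  have h2 := h1.comp_sub_right m
  refine h2.congr ?_
  filter_upwards with y
  simp [sub_add_cancel]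

lemma full_line {b : ℝ} (hb : 0 < b) (m : ℝ) :
    ∫ y : ℝ, y * Real.exp (-b * (y - m) ^ 2) = m * Real.sqrt (π / b) := by
  have h1 : ∫ y : ℝ, y * Real.exp (-b * (y - m) ^ 2)
      = ∫ y : ℝ, (y + m) * Real.exp (-b * y ^ 2) := by
    rw [← integral_add_right_eq_self (fun y : ℝ => y * Real.exp (-b * (y - m) ^ 2)) m]
    simp [add_sub_cancel_right]
  rw [h1]
  have h2 : ∫ y : ℝ, (y + m) * Real.exp (-b * y ^ 2)
      = (∫ y : ℝ, y * Real.exp (-b * y ^ 2)) + ∫ y : ℝ, m * Real.exp (-b * y ^ 2) := by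
    rw [← integral_add (integrable_mul_exp_neg_mul_sq hb)
      ((integrable_exp_neg_mul_sq hb).const_mul m)]
    congr 1; ext y; ring
  rw [h2, odd_gauss_zero, integral_const_mul, integral_gaussian, zero_add]

lemma half_line {b : ℝ} (hb : 0 < b) (m : ℝ) :
    ∫ y in Ioi (0 : ℝ),
        (y * Real.exp (-b * (y - m) ^ 2) - y * Real.exp (-b * (y + m) ^ 2))
      = m * Real.sqrt (π / b) := by
  have hF := integrable_F hb m
  have hG : Integrable (fun y : ℝ => y * Real.exp (-b * (y + m) ^ 2)) := by
    refine (integrable_F hb (-m)).congr ?_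
    filter_upwards with y
    rw [sub_neg_eq_add]
  rw [integral_sub hF.integrableOn hG.integrableOn]
  have h := integral_comp_neg_Ioi (0 : ℝ) (fun y => y * Real.exp (-b * (y - m) ^ 2))
  simp only [neg_zero] at h
  have heq : ∀ x : ℝ, (-x) * Real.exp (-b * (-x - m) ^ 2)
      = -(x * Real.exp (-b * (x + m) ^ 2)) := by
    intro x
    have h2 : (-x - m) ^ 2 = (x + m) ^ 2 := by ring
    rw [h2]; ring
  simp_rw [heq, integral_neg] at h
  have hsum := intervalIntegral.integral_Iic_add_Ioi (b := (0:ℝ)) (μ := volume)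
    hF.integrableOn hF.integrableOn
  have := full_line hb m
  linarith


/-- **Integral identity (Lemma B.2, first part).** For `ε ∈ (0,1)` and `c > 0`,
`∫_0^∞ (y/(1-ε)) e^{-y²/(2(1-ε))} (e^{-(y-c)²/(2ε)} - e^{-(y+c)²/(2ε)}) dy
  = √(2π) √(ε(1-ε)) c e^{-c²/2}`. -/
theorem integral_identity_two (ε : ℝ) (hε : ε ∈ Set.Ioo (0 : ℝ) 1) (c : ℝ) (hc : 0 < c) :
    ∫ y in Set.Ioi (0 : ℝ), (y / (1 - ε)) * Real.exp (-y ^ 2 / (2 * (1 - ε)))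
        * (Real.exp (-(y - c) ^ 2 / (2 * ε)) - Real.exp (-(y + c) ^ 2 / (2 * ε)))
      = Real.sqrt (2 * Real.pi) * Real.sqrt (ε * (1 - ε)) * c * Real.exp (-c ^ 2 / 2) := by
  obtain ⟨hε0, hε1⟩ := hε
  have ha : (0 : ℝ) < 1 - ε := by linarith
  set b : ℝ := (2 * (ε * (1 - ε)))⁻¹ with hbdef
  have hb : 0 < b := by positivity
  set m : ℝ := (1 - ε) * c with hmdef
  have key : ∀ y : ℝ, (y / (1 - ε)) * Real.exp (-y ^ 2 / (2 * (1 - ε)))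
        * (Real.exp (-(y - c) ^ 2 / (2 * ε)) - Real.exp (-(y + c) ^ 2 / (2 * ε)))
      = (Real.exp (-c ^ 2 / 2) / (1 - ε))
        * (y * Real.exp (-b * (y - m) ^ 2) - y * Real.exp (-b * (y + m) ^ 2)) := by
    intro y
    have e1 : Real.exp (-y ^ 2 / (2 * (1 - ε))) * Real.exp (-(y - c) ^ 2 / (2 * ε))
        = Real.exp (-c ^ 2 / 2) * Real.exp (-b * (y - m) ^ 2) := by
      rw [← Real.exp_add, ← Real.exp_add]
      congr 1
      rw [hbdef, hmdef]
      field_simp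
      ring
    have e2 : Real.exp (-y ^ 2 / (2 * (1 - ε))) * Real.exp (-(y + c) ^ 2 / (2 * ε))
        = Real.exp (-c ^ 2 / 2) * Real.exp (-b * (y + m) ^ 2) := by
      rw [← Real.exp_add, ← Real.exp_add]
      congr 1
      rw [hbdef, hmdef]
      field_simp
      ring
    calc (y / (1 - ε)) * Real.exp (-y ^ 2 / (2 * (1 - ε)))
        * (Real.exp (-(y - c) ^ 2 / (2 * ε)) - Real.exp (-(y + c) ^ 2 / (2 * ε)))
        = (y / (1 - ε)) * (Real.exp (-y ^ 2 / (2 * (1 - ε))) * Real.exp (-(y - c) ^ 2 / (2 * ε)))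
          - (y / (1 - ε)) * (Real.exp (-y ^ 2 / (2 * (1 - ε))) * Real.exp (-(y + c) ^ 2 / (2 * ε))) := by
          ring
      _ = _ := by rw [e1, e2]; ring
  rw [show (fun y : ℝ => (y / (1 - ε)) * Real.exp (-y ^ 2 / (2 * (1 - ε)))
        * (Real.exp (-(y - c) ^ 2 / (2 * ε)) - Real.exp (-(y + c) ^ 2 / (2 * ε))))
      = fun y : ℝ => (Real.exp (-c ^ 2 / 2) / (1 - ε))
        * (y * Real.exp (-b * (y - m) ^ 2) - y * Real.exp (-b * (y + m) ^ 2)) from funext key]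
  rw [integral_const_mul, half_line hb m]
  have hπb : π / b = 2 * π * (ε * (1 - ε)) := by
    rw [hbdef]; field_simp
  rw [hπb, Real.sqrt_mul (by positivity)]
  rw [hmdef]
  field_simp
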